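/- Let G be a Tanner graph with girth g > 4 in which every variable node has degree at least d ≥ 3 and every check node has degree at least 2. Then every nonzero nonnegative real vector p satisfying the fundamental cone inequalities of G satisfies w_BSC(p) ≥ (d−1)^{⌈g/4⌉−1} and w_AWGN(p) ≥ (d−1)^{⌈g/4⌉−1}. -/

import Mathlib

/-- A Tanner graph with `n` variable nodes and `m` check nodes, given by the
neighborhood `N u` (the set of variable nodes adjacent to check node `u`). -/
structure TannerGraph (n m : ℕ) where
  N : Fin m → Finset (Fin n)

/-- The underlying bipartite simple graph of a Tanner graph, on vertex set
`Fin n ⊕ Fin m` (variable nodes on the left, check nodes on the right). -/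
def TannerGraph.graph {n m : ℕ} (G : TannerGraph n m) : SimpleGraph (Fin n ⊕ Fin m) :=
  SimpleGraph.fromRel (fun a b =>
    match a, b with
    | Sum.inl i, Sum.inr j => i ∈ G.N j
    | _, _ => False)

/-- The degree of variable node `i` in the Tanner graph. -/
def TannerGraph.varDeg {n m : ℕ} (G : TannerGraph n m) (i : Fin n) : ℕ :=
  (Finset.univ.filter (fun j : Fin m => i ∈ G.N j)).card

/-- AWGN pseudocodeword weight. -/
noncomputable def wAWGN {n : ℕ} (p : Fin n → ℝ) : ℝ :=
  (∑ i, p i) ^ 2 / (∑ i, (p i) ^ 2)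

/-- The sum of the `e` largest components of `p` (for nonnegative `p`),
expressed as the largest sum over sets of `e` coordinates. -/
noncomputable def maxSum {n : ℕ} (p : Fin n → ℝ) (e : ℕ) : ℝ :=
  sSup ((fun S : Finset (Fin n) => ∑ i ∈ S, p i) '' {S | S.card = e})

/-- The smallest number `e` such that the sum of the `e` largest components of `p`
is at least half of the total sum. -/
noncomputable def eBSC {n : ℕ} (p : Fin n → ℝ) : ℕ :=
  sInf {e : ℕ | (∑ i, p i) / 2 ≤ maxSum p e}

/-- BSC pseudocodeword weight. -/
noncomputable def wBSC {n : ℕ} (p : Fin n → ℝ) : ℝ :=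
  if maxSum p (eBSC p) = (∑ i, p i) / 2 then 2 * (eBSC p : ℝ) else 2 * (eBSC p : ℝ) - 1

open SimpleGraph

open SimpleGraph

lemma exists_cycle_of_two_paths {V : Type*} [DecidableEq V] {G : SimpleGraph V} :
    ∀ {x y : V} (p : G.Walk x y), ∀ q : G.Walk x y, p.IsPath → q.IsPath → p ≠ q →
      ∃ (z : V) (c : G.Walk z z), c.IsCycle ∧ c.length ≤ p.length + q.length := by
  intro x y p
  induction p with
  | nil =>
    intro q _ hq hne
    exact absurd (Walk.isPath_iff_eq_nil.mp hq).symm hne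
  | @cons x a y h1 p' ih =>
    intro q hp hq hne
    have hp' : p'.IsPath := (Walk.cons_isPath_iff h1 p').mp hp |>.1
    have hxp' : x ∉ p'.support := (Walk.cons_isPath_iff h1 p').mp hp |>.2
    cases q with
    | nil =>
      exact absurd (Walk.isPath_iff_eq_nil.mp hp) (by simp)
    | @cons _ b _ h2 q' =>
      have hq' : q'.IsPath := (Walk.cons_isPath_iff h2 q').mp hq |>.1
      have hxq' : x ∉ q'.support := (Walk.cons_isPath_iff h2 q').mp hq |>.2
      by_cases hab : a = b
      · subst hab
        have hne' : p' ≠ q' := by rintro rfl; exact hne rfl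
        obtain ⟨z, c, hc, hlen⟩ := ih q' hp' hq' hne'
        exact ⟨z, c, hc, by simp only [Walk.length_cons]; omega⟩
      · -- different first edges: build a cycle through x
        set w' : G.Walk a x := p'.append (Walk.cons h2 q').reverse with hw'
        have hx : x ∈ w'.support := w'.end_mem_support
        set t := w'.takeUntil x hx with ht
        refine ⟨x, Walk.cons h1 t.bypass, ?_, ?_⟩
        · rw [Walk.cons_isCycle_iff]
          refine ⟨t.bypass_isPath, fun he => ?_⟩
          have he1 : s(x, a) ∈ w'.edges :=
            (w'.edges_takeUntil_subset hx) (t.edges_bypass_subset he)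
          rw [hw', Walk.edges_append] at he1
          rcases List.mem_append.mp he1 with h | h
          · exact hxp' (p'.fst_mem_support_of_mem_edges h)
          · rw [Walk.edges_reverse, List.mem_reverse, Walk.edges_cons] at h
            rcases List.mem_cons.mp h with h | h
            · rcases Sym2.eq_iff.mp h with ⟨-, h⟩ | ⟨-, h⟩
              · exact hab h
              · exact h1.ne h.symm
            · exact hxq' (q'.fst_mem_support_of_mem_edges h)
        · have l1 : t.bypass.length ≤ t.length := t.length_bypass_le
          have l2 : t.length ≤ w'.length := w'.length_takeUntil_le hx
          have l3 : w'.length = p'.length + (q'.length + 1) := by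
            rw [hw', Walk.length_append, Walk.length_reverse, Walk.length_cons]
          simp only [Walk.length_cons]
          omega

lemma dist_le_of_mem_support {V : Type*} [DecidableEq V] {G : SimpleGraph V} {r v x : V} {P : G.Walk v r}
    (hx : x ∈ P.support) : G.dist r x ≤ P.length := by
  rw [SimpleGraph.dist_comm]
  exact le_trans (SimpleGraph.dist_le (P.dropUntil x hx)) (P.length_dropUntil_le hx)

lemma isPath_cons_of_dist {V : Type*} [DecidableEq V] {G : SimpleGraph V} {r u v : V} {P : G.Walk v r}
    (hP : P.IsPath) (h : G.Adj u v) (hu : P.length < G.dist r u) : (Walk.cons h P).IsPath := by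
  rw [Walk.cons_isPath_iff]
  exact ⟨hP, fun hmem => absurd (dist_le_of_mem_support hmem) (by omega)⟩
variable {n m : ℕ} {G : TannerGraph n m}

lemma tg_adj_inl_inr {i : Fin n} {j : Fin m} :
    G.graph.Adj (Sum.inl i) (Sum.inr j) ↔ i ∈ G.N j := by
  simp [TannerGraph.graph, SimpleGraph.fromRel_adj]

lemma tg_adj_isLeft {a b : Fin n ⊕ Fin m} (h : G.graph.Adj a b) : a.isLeft = !b.isLeft := by
  cases a <;> cases b <;> simp_all [TannerGraph.graph, SimpleGraph.fromRel_adj]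

lemma tg_walk_parity {a b : Fin n ⊕ Fin m} (w : G.graph.Walk a b) :
    Even w.length ↔ (a.isLeft = b.isLeft) := by
  induction w with
  | nil => simp
  | @cons u v z h q ih =>
    have hio := tg_adj_isLeft h
    rw [Walk.length_cons, Nat.even_add_one, ih]
    cases hb : z.isLeft <;> cases hv : v.isLeft <;> simp_all

lemma tg_cycle_ge {g : ℕ} (hgirth : G.graph.girth = (g : ℕ∞)) (hg : 4 < g) :
    ∀ (z : Fin n ⊕ Fin m) (c : G.graph.Walk z z), c.IsCycle → g ≤ c.length := by
  have hgg : G.graph.girth = g := by exact_mod_cast hgirth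
  have hne : G.graph.egirth ≠ ⊤ := by
    intro htop
    rw [SimpleGraph.girth, htop] at hgg
    simp at hgg
    omega
  have hE : G.graph.egirth = (g : ℕ∞) := by
    rw [← hgg, SimpleGraph.girth, ENat.coe_toNat hne]
  intro z c hc
  have : G.graph.egirth ≤ (c.length : ℕ∞) :=
    iInf_le_of_le z (iInf_le_of_le c (iInf_le _ hc))
  rw [hE] at this
  exact_mod_cast this

lemma tg_key_sum {g d k : ℕ} (hd : 3 ≤ d)
    (hdeg : ∀ i : Fin n, d ≤ G.varDeg i)
    (hcyc : ∀ (z : Fin n ⊕ Fin m) (c : G.graph.Walk z z), c.IsCycle → g ≤ c.length)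
    (p : Fin n → ℝ) (hp0 : ∀ i, 0 ≤ p i)
    (hcone : ∀ j : Fin m, ∀ i ∈ G.N j, p i ≤ ∑ w ∈ (G.N j).erase i, p w)
    (i0 : Fin n) (hk : 4 * k < g) :
    ((d : ℝ) - 1) ^ k * p i0 ≤ ∑ i, p i := by
  classical
  set GR := G.graph with hGR
  set r : Fin n ⊕ Fin m := Sum.inl i0 with hr
  -- uniqueness of short paths
  have huniq : ∀ {x y : Fin n ⊕ Fin m} (P Q : GR.Walk x y), P.IsPath → Q.IsPath →
      P.length + Q.length < g → P = Q := by
    intro x y P Q hP hQ hlen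
    by_contra hne
    obtain ⟨z, c, hc, hcl⟩ := exists_cycle_of_two_paths P Q hP hQ hne
    have := hcyc z c hc
    omega
  -- parity of distances
  have hparL : ∀ w : Fin n, GR.Reachable r (Sum.inl w) → Even (GR.dist r (Sum.inl w)) := by
    intro w hw
    obtain ⟨P, hP, hl⟩ := hw.exists_path_of_dist
    rw [← hl]
    rw [tg_walk_parity P]
    rfl
  have hparR : ∀ j : Fin m, GR.Reachable r (Sum.inr j) → ¬ Even (GR.dist r (Sum.inr j)) := by
    intro j hj
    obtain ⟨P, hP, hl⟩ := hj.exists_path_of_dist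
    rw [← hl, tg_walk_parity P]
    simp [hr]
  -- adjacency triangle inequality
  have htri : ∀ u v : Fin n ⊕ Fin m, GR.Reachable r u → GR.Adj u v →
      GR.dist r v ≤ GR.dist r u + 1 := by
    intro u v hu hadj
    obtain ⟨P, hP, hl⟩ := hu.exists_path_of_dist
    have := SimpleGraph.dist_le (P.concat hadj)
    rwa [Walk.length_concat, hl] at this
  -- the BFS levels
  set L : ℕ → Finset (Fin n) := fun t =>
    if t = 0 then {i0} else Finset.univ.filter (fun i => GR.dist r (Sum.inl i) = 2*t) with hL
  have hmemL : ∀ {t : ℕ} {i : Fin n}, i ∈ L t →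
      GR.Reachable r (Sum.inl i) ∧ GR.dist r (Sum.inl i) = 2*t := by
    intro t i hi
    rcases Nat.eq_zero_or_pos t with rfl | ht
    · simp only [hL, if_pos rfl, Finset.mem_singleton] at hi
      subst hi
      exact ⟨Reachable.refl _, by simp [SimpleGraph.dist_self, hr]⟩
    · have hd' : GR.dist r (Sum.inl i) = 2*t := by
        simp only [hL, if_neg (by omega : t ≠ 0), Finset.mem_filter] at hi
        exact hi.2
      refine ⟨?_, hd'⟩
      by_contra h
      rw [SimpleGraph.dist_eq_zero_of_not_reachable h] at hd'
      omega
  -- chosen shortest paths from level-t vertices back to the root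
  have hPi : ∀ t : ℕ, ∀ i ∈ L t, ∃ P : GR.Walk (Sum.inl i) r, P.IsPath ∧ P.length = 2*t := by
    intro t i hi
    obtain ⟨hre, hdist⟩ := hmemL hi
    obtain ⟨P, hP, hl⟩ := hre.exists_path_of_dist
    exact ⟨P.reverse, hP.reverse, by rw [Walk.length_reverse, hl, hdist]⟩
  -- the step inequality
  have hstep : ∀ t : ℕ, t + 1 ≤ k →
      ((d:ℝ)-1) * (∑ i ∈ L t, p i) ≤ ∑ i ∈ L (t+1), p i := by
    intro t htk
    set C : Fin n → Finset (Fin m) := fun i =>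
      Finset.univ.filter (fun j => i ∈ G.N j ∧ GR.dist r (Sum.inr j) = 2*t+1) with hC
    -- distances to checks adjacent to a level-t variable node
    have hnb : ∀ i ∈ L t, ∀ j, i ∈ G.N j →
        GR.Reachable r (Sum.inr j) ∧
        (GR.dist r (Sum.inr j) = 2*t+1 ∨ GR.dist r (Sum.inr j) + 1 = 2*t) := by
      intro i hi j hij
      have hadj : GR.Adj (Sum.inl i) (Sum.inr j) := tg_adj_inl_inr.mpr hij
      obtain ⟨hre_i, hdist_i⟩ := hmemL hi
      have hre_j : GR.Reachable r (Sum.inr j) := hre_i.trans hadj.reachable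
      have h1 : GR.dist r (Sum.inr j) ≤ 2*t + 1 := by
        have := htri _ _ hre_i hadj
        omega
      have h2 : GR.dist r (Sum.inl i) ≤ GR.dist r (Sum.inr j) + 1 := htri _ _ hre_j hadj.symm
      have h3 := hparR j hre_j
      rw [Nat.not_even_iff] at h3
      exact ⟨hre_j, by omega⟩
    -- at most one check neighbor lies closer to the root
    have hbad : ∀ i ∈ L t, ∀ j1 j2, i ∈ G.N j1 → i ∈ G.N j2 →
        GR.dist r (Sum.inr j1) + 1 = 2*t → GR.dist r (Sum.inr j2) + 1 = 2*t → j1 = j2 := by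
      intro i hi j1 j2 h1 h2 hd1 hd2
      by_contra hne
      have hre1 : GR.Reachable r (Sum.inr j1) := by
        by_contra h
        rw [SimpleGraph.dist_eq_zero_of_not_reachable h] at hd1
        omega
      have hre2 : GR.Reachable r (Sum.inr j2) := by
        by_contra h
        rw [SimpleGraph.dist_eq_zero_of_not_reachable h] at hd2
        omega
      obtain ⟨Q1, hQ1, hQ1l⟩ := hre1.exists_path_of_dist
      obtain ⟨Q2, hQ2, hQ2l⟩ := hre2.exists_path_of_dist
      have hdist_i := (hmemL hi).2
      have a1 : GR.Adj (Sum.inl i) (Sum.inr j1) := tg_adj_inl_inr.mpr h1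
      have a2 : GR.Adj (Sum.inl i) (Sum.inr j2) := tg_adj_inl_inr.mpr h2
      have hR1 : (Walk.cons a1 Q1.reverse).IsPath :=
        isPath_cons_of_dist hQ1.reverse a1 (by rw [Walk.length_reverse, hQ1l]; omega)
      have hR2 : (Walk.cons a2 Q2.reverse).IsPath :=
        isPath_cons_of_dist hQ2.reverse a2 (by rw [Walk.length_reverse, hQ2l]; omega)
      have heq := huniq (Walk.cons a1 Q1.reverse) (Walk.cons a2 Q2.reverse) hR1 hR2
        (by simp only [Walk.length_cons, Walk.length_reverse, hQ1l, hQ2l]; omega)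
      have hgv : (Walk.cons a1 Q1.reverse).getVert 1 = (Walk.cons a2 Q2.reverse).getVert 1 := by
        rw [heq]
      rw [Walk.getVert_cons_succ, Walk.getVert_cons_succ, Walk.getVert_zero,
        Walk.getVert_zero] at hgv
      exact hne (Sum.inr.inj hgv)
    -- at least d - 1 check neighbors at distance 2t+1
    have hcard : ∀ i ∈ L t, d - 1 ≤ (C i).card := by
      intro i hi
      have hA : d ≤ (Finset.univ.filter (fun j : Fin m => i ∈ G.N j)).card := hdeg i
      set A := Finset.univ.filter (fun j : Fin m => i ∈ G.N j) with hAdef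
      have hsplit := Finset.card_filter_add_card_filter_not
        (s := A) (p := fun j => GR.dist r (Sum.inr j) = 2*t+1)
      have hCA : C i = A.filter (fun j => GR.dist r (Sum.inr j) = 2*t+1) := by
        ext j
        simp [hC, hAdef, and_assoc]
      have hBcard : (A.filter (fun j => ¬ GR.dist r (Sum.inr j) = 2*t+1)).card ≤ 1 := by
        rw [Finset.card_le_one]
        intro j1 hj1 j2 hj2
        simp only [Finset.mem_filter, hAdef, Finset.mem_univ, true_and] at hj1 hj2
        have hb1 := (hnb i hi j1 hj1.1).2.resolve_left hj1.2
        have hb2 := (hnb i hi j2 hj2.1).2.resolve_left hj2.2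
        exact hbad i hi j1 j2 hj1.1 hj2.1 hb1 hb2
      rw [← hCA] at hsplit
      omega
    -- members of the erased neighborhoods lie on level t+1
    have hsub : ∀ i ∈ L t, ∀ j ∈ C i, ∀ w ∈ (G.N j).erase i, w ∈ L (t+1) := by
      intro i hi j hj w hw
      obtain ⟨hwne, hwN⟩ := Finset.mem_erase.mp hw
      obtain ⟨P, hP, hPl⟩ := hPi t i hi
      simp only [hC, Finset.mem_filter, Finset.mem_univ, true_and] at hj
      obtain ⟨hij, hdj⟩ := hj
      have a1 : GR.Adj (Sum.inr j) (Sum.inl i) := (tg_adj_inl_inr.mpr hij).symm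
      have a2 : GR.Adj (Sum.inl w) (Sum.inr j) := tg_adj_inl_inr.mpr hwN
      have hRpath : (Walk.cons a1 P).IsPath :=
        isPath_cons_of_dist hP a1 (by omega)
      have hre_w : GR.Reachable r (Sum.inl w) := ⟨(Walk.cons a2 (Walk.cons a1 P)).reverse⟩
      have h_le : GR.dist r (Sum.inl w) ≤ 2*t+2 := by
        have := SimpleGraph.dist_le (Walk.cons a2 (Walk.cons a1 P)).reverse
        simp only [Walk.length_reverse, Walk.length_cons, hPl] at this
        omega
      have h_ge : GR.dist r (Sum.inr j) ≤ GR.dist r (Sum.inl w) + 1 := htri _ _ hre_w a2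
      have h_even := hparL w hre_w
      rw [Nat.even_iff] at h_even
      have h_ne : GR.dist r (Sum.inl w) ≠ 2*t := by
        intro hdw
        obtain ⟨Pw, hPw, hPwl⟩ := hre_w.exists_path_of_dist
        have hR2 : (Walk.cons a2.symm Pw.reverse).IsPath :=
          isPath_cons_of_dist hPw.reverse a2.symm
            (by rw [Walk.length_reverse, hPwl, hdw]; omega)
        have heq := huniq (Walk.cons a1 P) (Walk.cons a2.symm Pw.reverse) hRpath hR2
          (by simp only [Walk.length_cons, Walk.length_reverse, hPl, hPwl, hdw]; omega)
        have hgv : (Walk.cons a1 P).getVert 1 = (Walk.cons a2.symm Pw.reverse).getVert 1 := by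
          rw [heq]
        rw [Walk.getVert_cons_succ, Walk.getVert_cons_succ, Walk.getVert_zero,
          Walk.getVert_zero] at hgv
        exact hwne (Sum.inl.inj hgv).symm
      have hdw : GR.dist r (Sum.inl w) = 2*(t+1) := by omega
      simp only [hL, if_neg (by omega : t + 1 ≠ 0), Finset.mem_filter, Finset.mem_univ, true_and]
      exact hdw
    -- disjointness of the erased neighborhoods over pairs (i, j)
    have hdisj : ∀ i1, i1 ∈ L t → ∀ i2, i2 ∈ L t → ∀ j1 ∈ C i1, ∀ j2 ∈ C i2,
        ¬(i1 = i2 ∧ j1 = j2) → ∀ w, w ∈ (G.N j1).erase i1 → w ∈ (G.N j2).erase i2 → False := by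
      intro i1 hi1 i2 hi2 j1 hj1 j2 hj2 hne w hw1 hw2
      have hwL := hsub i1 hi1 j1 hj1 w hw1
      have hdw : GR.dist r (Sum.inl w) = 2*(t+1) := (hmemL hwL).2
      obtain ⟨P1, hP1, hP1l⟩ := hPi t i1 hi1
      obtain ⟨P2, hP2, hP2l⟩ := hPi t i2 hi2
      simp only [hC, Finset.mem_filter, Finset.mem_univ, true_and] at hj1 hj2
      obtain ⟨hij1, hdj1⟩ := hj1
      obtain ⟨hij2, hdj2⟩ := hj2
      obtain ⟨hwne1, hwN1⟩ := Finset.mem_erase.mp hw1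
      obtain ⟨hwne2, hwN2⟩ := Finset.mem_erase.mp hw2
      have b1 : GR.Adj (Sum.inr j1) (Sum.inl i1) := (tg_adj_inl_inr.mpr hij1).symm
      have b2 : GR.Adj (Sum.inr j2) (Sum.inl i2) := (tg_adj_inl_inr.mpr hij2).symm
      have c1 : GR.Adj (Sum.inl w) (Sum.inr j1) := tg_adj_inl_inr.mpr hwN1
      have c2 : GR.Adj (Sum.inl w) (Sum.inr j2) := tg_adj_inl_inr.mpr hwN2
      have hQ1 : (Walk.cons b1 P1).IsPath := isPath_cons_of_dist hP1 b1 (by omega)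
      have hQ2 : (Walk.cons b2 P2).IsPath := isPath_cons_of_dist hP2 b2 (by omega)
      have hR1 : (Walk.cons c1 (Walk.cons b1 P1)).IsPath :=
        isPath_cons_of_dist hQ1 c1 (by simp only [Walk.length_cons, hP1l]; omega)
      have hR2 : (Walk.cons c2 (Walk.cons b2 P2)).IsPath :=
        isPath_cons_of_dist hQ2 c2 (by simp only [Walk.length_cons, hP2l]; omega)
      have heq := huniq (Walk.cons c1 (Walk.cons b1 P1)) (Walk.cons c2 (Walk.cons b2 P2)) hR1 hR2
        (by simp only [Walk.length_cons, hP1l, hP2l]; omega)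
      have hgv1 : (Walk.cons c1 (Walk.cons b1 P1)).getVert 1
          = (Walk.cons c2 (Walk.cons b2 P2)).getVert 1 := by rw [heq]
      have hgv2 : (Walk.cons c1 (Walk.cons b1 P1)).getVert 2
          = (Walk.cons c2 (Walk.cons b2 P2)).getVert 2 := by rw [heq]
      rw [Walk.getVert_cons_succ, Walk.getVert_cons_succ, Walk.getVert_zero,
        Walk.getVert_zero] at hgv1
      rw [Walk.getVert_cons_succ, Walk.getVert_cons_succ, Walk.getVert_cons_succ,
        Walk.getVert_cons_succ, Walk.getVert_zero, Walk.getVert_zero] at hgv2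
      exact hne ⟨(Sum.inl.inj hgv2), (Sum.inr.inj hgv1)⟩
    -- now the sum computation
    calc ((d:ℝ)-1) * ∑ i ∈ L t, p i
        = ∑ i ∈ L t, ((d:ℝ)-1) * p i := by rw [Finset.mul_sum]
      _ ≤ ∑ i ∈ L t, ∑ j ∈ C i, ∑ w ∈ (G.N j).erase i, p w := by
          refine Finset.sum_le_sum (fun i hi => ?_)
          have hcd := hcard i hi
          have hdr : ((d:ℝ)-1) ≤ ((C i).card : ℝ) := by
            have : (d:ℝ) ≤ ((C i).card : ℝ) + 1 := by exact_mod_cast (by omega : d ≤ (C i).card + 1)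
            linarith
          calc ((d:ℝ)-1) * p i ≤ ((C i).card : ℝ) * p i :=
                mul_le_mul_of_nonneg_right hdr (hp0 i)
            _ = ∑ _j ∈ C i, p i := by rw [Finset.sum_const, nsmul_eq_mul]
            _ ≤ ∑ j ∈ C i, ∑ w ∈ (G.N j).erase i, p w := by
                refine Finset.sum_le_sum (fun j hj => ?_)
                simp only [hC, Finset.mem_filter, Finset.mem_univ, true_and] at hj
                exact hcone j i hj.1
      _ = ∑ i ∈ L t, ∑ w ∈ (C i).biUnion (fun j => (G.N j).erase i), p w := by
          refine Finset.sum_congr rfl (fun i hi => (Finset.sum_biUnion ?_).symm)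
          intro j1 hj1 j2 hj2 hne
          simp only [Function.onFun]
          rw [Finset.disjoint_left]
          intro w hw1 hw2
          exact hdisj i hi i hi j1 (Finset.mem_coe.mp hj1) j2 (Finset.mem_coe.mp hj2)
            (by simp [hne]) w hw1 hw2
      _ = ∑ w ∈ (L t).biUnion (fun i => (C i).biUnion (fun j => (G.N j).erase i)), p w := by
          refine (Finset.sum_biUnion ?_).symm
          intro i1 hi1 i2 hi2 hne
          simp only [Function.onFun]
          rw [Finset.disjoint_left]
          intro w hw1 hw2
          rw [Finset.mem_biUnion] at hw1 hw2
          obtain ⟨j1, hj1, hw1⟩ := hw1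
          obtain ⟨j2, hj2, hw2⟩ := hw2
          exact hdisj i1 (Finset.mem_coe.mp hi1) i2 (Finset.mem_coe.mp hi2) j1 hj1 j2 hj2
            (fun h => hne (by simp [h.1])) w hw1 hw2
      _ ≤ ∑ w ∈ L (t+1), p w := by
          refine Finset.sum_le_sum_of_subset_of_nonneg ?_ (fun w _ _ => hp0 w)
          intro w hw
          rw [Finset.mem_biUnion] at hw
          obtain ⟨i, hi, hw⟩ := hw
          rw [Finset.mem_biUnion] at hw
          obtain ⟨j, hj, hw⟩ := hw
          exact hsub i hi j hj w hw
  -- the main induction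
  have hd1 : (0:ℝ) ≤ (d:ℝ) - 1 := by
    have : (3:ℝ) ≤ (d:ℝ) := by exact_mod_cast hd
    linarith
  have hmain : ∀ t, t ≤ k → ((d:ℝ)-1)^t * p i0 ≤ ∑ i ∈ L t, p i := by
    intro t
    induction t with
    | zero => intro _; simp [hL]
    | succ t ih =>
      intro h
      calc ((d:ℝ)-1)^(t+1) * p i0 = ((d:ℝ)-1) * (((d:ℝ)-1)^t * p i0) := by ring
        _ ≤ ((d:ℝ)-1) * ∑ i ∈ L t, p i :=
            mul_le_mul_of_nonneg_left (ih (by omega)) hd1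
        _ ≤ ∑ i ∈ L (t+1), p i := hstep t h
  exact (hmain k le_rfl).trans
    (Finset.sum_le_sum_of_subset_of_nonneg (Finset.subset_univ _) (fun i _ _ => hp0 i))

theorem feldman_bound {n m : ℕ} (G : TannerGraph n m) (g d : ℕ)
    (hd : 3 ≤ d) (hdeg : ∀ i : Fin n, d ≤ G.varDeg i)
    (hcheckdeg : ∀ j : Fin m, 2 ≤ (G.N j).card)
    (hgirth : G.graph.girth = (g : ℕ∞)) (hg : 4 < g)
    (p : Fin n → ℝ) (hp0 : ∀ i, 0 ≤ p i) (hpne : p ≠ 0)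
    (hcone : ∀ j : Fin m, ∀ i ∈ G.N j, p i ≤ ∑ k ∈ (G.N j).erase i, p k) :
    ((d : ℝ) - 1) ^ ((g + 3) / 4 - 1) ≤ wBSC p ∧
    ((d : ℝ) - 1) ^ ((g + 3) / 4 - 1) ≤ wAWGN p := by
  classical
  -- a coordinate where p is positive
  have hex : ∃ i, p i ≠ 0 := by
    by_contra h
    push_neg at h
    exact hpne (funext fun i => h i)
  obtain ⟨i1, hi1⟩ := hex
  -- a coordinate of maximal weight
  obtain ⟨i0, -, hmax⟩ := Finset.exists_max_image Finset.univ p ⟨i1, Finset.mem_univ i1⟩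
  have hmax : ∀ i, p i ≤ p i0 := fun i => hmax i (Finset.mem_univ i)
  have hM : 0 < p i0 := lt_of_lt_of_le ((hp0 i1).lt_of_ne (Ne.symm hi1)) (hmax i1)
  set k := (g + 3) / 4 - 1 with hkdef
  have hk : 4 * k < g := by omega
  have hcyc := tg_cycle_ge (G := G) hgirth hg
  have hkey : ((d : ℝ) - 1) ^ k * p i0 ≤ ∑ i, p i :=
    tg_key_sum hd hdeg hcyc p hp0 hcone i0 hk
  set P : ℝ := ∑ i, p i with hPdef
  have hPpos : 0 < P :=
    Finset.sum_pos' (fun i _ => hp0 i)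
      ⟨i0, Finset.mem_univ i0, hM⟩
  have hD0 : (0:ℝ) ≤ (d:ℝ) - 1 := by
    have : (3:ℝ) ≤ (d:ℝ) := by exact_mod_cast hd
    linarith
  set Dk : ℝ := ((d : ℝ) - 1) ^ k with hDkdef
  have hDk0 : 0 ≤ Dk := pow_nonneg hD0 k
  -- natural number version of Dk
  have hcast : Dk = (((d - 1) ^ k : ℕ) : ℝ) := by
    rw [hDkdef]
    push_cast [Nat.cast_sub (by omega : 1 ≤ d)]
    ring
  constructor
  · -- BSC part
    have hbdd : ∀ e : ℕ, BddAbove ((fun S : Finset (Fin n) => ∑ i ∈ S, p i) '' {S | S.card = e}) :=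
      fun e => Set.Finite.bddAbove ((Set.toFinite _).image _)
    have hn_mem : n ∈ {e : ℕ | P / 2 ≤ maxSum p e} := by
      have h1 : P ≤ maxSum p n :=
        le_csSup (hbdd n) ⟨Finset.univ, by simp, rfl⟩
      have : P / 2 ≤ P := by linarith
      exact le_trans this h1
    have hset_ne : {e : ℕ | P / 2 ≤ maxSum p e}.Nonempty := ⟨n, hn_mem⟩
    have hhalf : P / 2 ≤ maxSum p (eBSC p) := Nat.sInf_mem hset_ne
    have hen : eBSC p ≤ n := Nat.sInf_le hn_mem
    have hms_le : maxSum p (eBSC p) ≤ (eBSC p : ℝ) * p i0 := by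
      obtain ⟨S0, -, hS0⟩ := Finset.exists_subset_card_eq (s := (Finset.univ : Finset (Fin n)))
        (n := eBSC p) (by simpa using hen)
      refine csSup_le ⟨∑ i ∈ S0, p i, ⟨S0, hS0, rfl⟩⟩ ?_
      rintro x ⟨S, hS, rfl⟩
      calc ∑ i ∈ S, p i ≤ ∑ i ∈ S, p i0 := Finset.sum_le_sum (fun i _ => hmax i)
        _ = (S.card : ℝ) * p i0 := by rw [Finset.sum_const, nsmul_eq_mul]
        _ = (eBSC p : ℝ) * p i0 := by rw [hS]
    have hDkP : Dk * p i0 ≤ P := hkey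
    rw [wBSC]
    split_ifs with hcase
    · -- maxSum = P/2
      have h1 : Dk * p i0 ≤ 2 * (eBSC p : ℝ) * p i0 := by
        have : P / 2 ≤ (eBSC p : ℝ) * p i0 := le_trans hhalf hms_le
        nlinarith
      exact le_of_mul_le_mul_right (by linarith) hM
    · -- maxSum > P/2
      have hstrict : P / 2 < maxSum p (eBSC p) := lt_of_le_of_ne hhalf (Ne.symm hcase)
      have h1 : Dk * p i0 < 2 * (eBSC p : ℝ) * p i0 := by
        have : P / 2 < (eBSC p : ℝ) * p i0 := lt_of_lt_of_le hstrict hms_le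
        nlinarith
      have h2 : Dk < 2 * (eBSC p : ℝ) := lt_of_mul_lt_mul_right (by linarith) hM.le
      have h3 : (d - 1) ^ k < 2 * eBSC p := by
        rw [hcast] at h2
        exact_mod_cast h2
      have h4 : (d - 1) ^ k + 1 ≤ 2 * eBSC p := h3
      have h5 : (((d - 1) ^ k : ℕ) : ℝ) + 1 ≤ 2 * (eBSC p : ℝ) := by exact_mod_cast h4
      rw [hcast]
      linarith
  · -- AWGN part
    have hsq_le : ∑ i, (p i) ^ 2 ≤ p i0 * P := by
      rw [hPdef, Finset.mul_sum]
      refine Finset.sum_le_sum (fun i _ => ?_)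
      nlinarith [hp0 i, hmax i]
    have hsq_pos : 0 < ∑ i, (p i) ^ 2 :=
      Finset.sum_pos' (fun i _ => sq_nonneg _) ⟨i0, Finset.mem_univ i0, by positivity⟩
    have h1 : Dk ≤ P / p i0 := (le_div_iff₀ hM).mpr hkey
    have h2 : P / p i0 = P ^ 2 / (p i0 * P) := by
      field_simp
    have h3 : P ^ 2 / (p i0 * P) ≤ P ^ 2 / (∑ i, (p i) ^ 2) := by
      gcongr
    rw [wAWGN]
    calc Dk ≤ P / p i0 := h1
      _ = P ^ 2 / (p i0 * P) := h2
      _ ≤ P ^ 2 / (∑ i, (p i) ^ 2) := h3
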